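/- KKT characterization of the inner problem: let z : J → ℝ be an attack vector (values in {0,1}) and (x, q) ∈ S(z). Then (x, q) minimizes f over S(z) if and only if there exist μ : I → ℝ and nonnegative multipliers π : J → ℝ, σ : I → J → ℝ, ν : I → ℝ, and η, τ : I → I → ℝ (entries with i < i') such that: (i) γ * d i j + π j + μ i + σ i j ≥ 0 and (γ * d i j + π j + μ i + σ i j) * x i j = 0 for all i, j; (ii) setting ρ i = (1 − γ) * φ i + μ i + (1/λ i) * ∑_{l : i < l} (η i l − τ i l) − (1/λ i) * ∑_{l : l < i} (η l i − τ l i) + ν i / λ i, one has ρ i ≥ 0 and ρ i * q i = 0 for every i; (iii) π j * (C j * (1 − z j) − ∑_i x i j) = 0 for every j; (iv) σ i j * (C j * a i j − x i j) = 0 for all i, j; (v) ν i * (θ − q i / λ i) = 0 for every i; (vi) η i i' * (β − q i / λ i + q i' / λ i') = 0 and τ i i' * (q i / λ i − q i' / λ i' + β) = 0 for all i < i'. -/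

import Mathlib

open Finset

variable {m n : ℕ}

/-- The defender's feasible set `S(z)` given the attack vector `z`. -/
def Feas (lam : Fin m → ℝ) (C : Fin n → ℝ) (a : Fin m → Fin n → ℝ)
    (θ β : ℝ) (z : Fin n → ℝ) : Set ((Fin m → Fin n → ℝ) × (Fin m → ℝ)) :=
  {p | (∀ i j, 0 ≤ p.1 i j) ∧ (∀ i, 0 ≤ p.2 i) ∧
       (∀ j, ∑ i, p.1 i j ≤ C j * (1 - z j)) ∧
       (∀ i, (∑ j, p.1 i j) + p.2 i = lam i) ∧
       (∀ i j, p.1 i j ≤ C j * a i j) ∧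
       (∀ i, p.2 i / lam i ≤ θ) ∧
       (∀ i i', |p.2 i / lam i - p.2 i' / lam i'| ≤ β)}

/-- The defender's cost `f(x, q)`. -/
def cost (d : Fin m → Fin n → ℝ) (φ : Fin m → ℝ) (γ : ℝ)
    (p : (Fin m → Fin n → ℝ) × (Fin m → ℝ)) : ℝ :=
  (1 - γ) * ∑ i, φ i * p.2 i + γ * ∑ i, ∑ j, d i j * p.1 i j

open Filter



/-- dot product of two vectors indexed by a fintype -/
def kdot {K : Type*} [Fintype K] (u w : K → ℝ) : ℝ := ∑ k, u k * w k

lemma kdot_neg_right {K : Type*} [Fintype K] (u w : K → ℝ) :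
    kdot u (fun k => - w k) = - kdot u w := by
  simp [kdot, Finset.sum_neg_distrib]

lemma kdot_sub_right {K : Type*} [Fintype K] (u w w' : K → ℝ) :
    kdot u (fun k => w k - w' k) = kdot u w - kdot u w' := by
  simp [kdot, mul_sub, Finset.sum_sub_distrib]

lemma kdot_sub_smul_right {K : Type*} [Fintype K] (u w w0 : K → ℝ) (t : ℝ) :
    kdot u (fun k => w k - t * w0 k) = kdot u w - t * kdot u w0 := by
  simp [kdot, mul_sub, Finset.sum_sub_distrib, Finset.mul_sum]
  ring_nf
  congr 1
  ext k
  ring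

lemma kdot_sub_smul_left {K : Type*} [Fintype K] (u u0 w : K → ℝ) (t : ℝ) :
    kdot (fun k => u k - t * u0 k) w = kdot u w - t * kdot u0 w := by
  simp [kdot, sub_mul, Finset.sum_sub_distrib, Finset.mul_sum, mul_assoc]

theorem farkas {ι : Type*} [DecidableEq ι] {K : Type*} [Fintype K] (s : Finset ι) :
    ∀ (v : ι → K → ℝ) (c : K → ℝ),
    (∀ w : K → ℝ, (∀ i ∈ s, 0 ≤ kdot (v i) w) → 0 ≤ kdot c w) →
    ∃ y : ι → ℝ, (∀ i, 0 ≤ y i) ∧ ∀ k, c k = ∑ i ∈ s, y i * v i k := by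
  classical
  induction s using Finset.induction_on with
  | empty =>
    intro v c h
    refine ⟨0, fun i => le_rfl, fun k => ?_⟩
    have h1 := h (fun k => - c k) (by simp)
    rw [kdot_neg_right] at h1
    have h2 : kdot c c ≤ 0 := by linarith
    have h3 : ∀ k ∈ (Finset.univ : Finset K), c k * c k = 0 := by
      apply (Finset.sum_eq_zero_iff_of_nonneg (fun k _ => mul_self_nonneg (c k))).mp
      have h4 : 0 ≤ kdot c c := Finset.sum_nonneg (fun k _ => mul_self_nonneg (c k))
      exact le_antisymm h2 h4
    simpa using mul_self_eq_zero.mp (h3 k (Finset.mem_univ k))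
  | insert a s ha IH =>
    intro v c h
    by_cases hcase : ∀ w : K → ℝ, (∀ i ∈ s, 0 ≤ kdot (v i) w) → 0 ≤ kdot c w
    · obtain ⟨y, hy, hc⟩ := IH v c hcase
      refine ⟨fun i => if i = a then 0 else y i, ?_, fun k => ?_⟩
      · intro i; dsimp only; split
        · exact le_rfl
        · exact hy i
      rw [Finset.sum_insert ha]
      simp only [if_pos, if_true, zero_mul, zero_add]
      rw [hc k]
      apply Finset.sum_congr rfl
      intro i hi
      rw [if_neg (by rintro rfl; exact ha hi)]
    · push_neg at hcase
      obtain ⟨w0, hw0, hcw0⟩ := hcase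
      have hva : kdot (v a) w0 < 0 := by
        by_contra hva
        push_neg at hva
        exact absurd (h w0 (fun i hi => by
          rcases Finset.mem_insert.mp hi with rfl | hi
          · exact hva
          · exact hw0 i hi)) (not_le.mpr hcw0)
      set r : (K → ℝ) → ℝ := fun u => kdot u w0 / kdot (v a) w0 with hr
      have hne : kdot (v a) w0 ≠ 0 := ne_of_lt hva
      have hyp : ∀ w : K → ℝ, (∀ i ∈ s, 0 ≤ kdot (fun k => v i k - r (v i) * v a k) w) →
          0 ≤ kdot (fun k => c k - r c * v a k) w := by
        intro w hw
        set w' : K → ℝ := fun k => w k - (kdot (v a) w / kdot (v a) w0) * w0 k with hw'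
        have key : ∀ u : K → ℝ, kdot u w' = kdot (fun k => u k - r u * v a k) w := by
          intro u
          rw [hw', kdot_sub_smul_right, kdot_sub_smul_left, hr]
          field_simp
        have hw'a : kdot (v a) w' = 0 := by
          rw [hw', kdot_sub_smul_right]
          field_simp
          ring
        have := h w' (fun i hi => by
          rcases Finset.mem_insert.mp hi with rfl | hi
          · rw [hw'a]
          · rw [key (v i)]; exact hw i hi)
        rw [key c] at this
        exact this
      obtain ⟨y, hy, hc'⟩ := IH (fun i k => v i k - r (v i) * v a k)
        (fun k => c k - r c * v a k) hyp
      · -- assemble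
        set t : ℝ := r c - ∑ i ∈ s, y i * r (v i) with hts
        have hrc : 0 < r c := div_pos_of_neg_of_neg hcw0 hva
        have hri : ∀ i ∈ s, r (v i) ≤ 0 := fun i hi =>
          div_nonpos_of_nonneg_of_nonpos (hw0 i hi) hva.le
        have ht : 0 ≤ t := by
          have : ∑ i ∈ s, y i * r (v i) ≤ 0 :=
            Finset.sum_nonpos (fun i hi => mul_nonpos_of_nonneg_of_nonpos (hy i) (hri i hi))
          simp only [hts]; linarith
        refine ⟨fun i => if i = a then t else y i, ?_, fun k => ?_⟩
        · intro i; dsimp only; split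
          · exact ht
          · exact hy i
        rw [Finset.sum_insert ha]
        simp only [if_pos, if_true]
        have := hc' k
        have hsum : ∑ i ∈ s, (if i = a then t else y i) * v i k
            = ∑ i ∈ s, y i * v i k := by
          apply Finset.sum_congr rfl
          intro i hi
          rw [if_neg (by rintro rfl; exact ha hi)]
        rw [hsum]
        have hexp : ∑ i ∈ s, y i * (v i k - r (v i) * v a k)
            = ∑ i ∈ s, y i * v i k - (∑ i ∈ s, y i * r (v i)) * v a k := by
          rw [Finset.sum_mul, ← Finset.sum_sub_distrib]
          apply Finset.sum_congr rfl
          intro i _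
          ring
        rw [hexp] at this
        rw [hts]
        linarith [this]
abbrev s8K (m n : ℕ) := (Fin m × Fin n) ⊕ Fin m

abbrev s8I (m n : ℕ) := (Fin m × Fin n) ⊕ (Fin m ⊕ (Fin n ⊕ (Fin m ⊕ (Fin m ⊕
  ((Fin m × Fin n) ⊕ (Fin m ⊕ ((Fin m × Fin m) ⊕ (Fin m × Fin m))))))))

def sind {m n : ℕ} (k0 : s8K m n) : s8K m n → ℝ := fun k => if k = k0 then 1 else 0

def vU {m n : ℕ} (j : Fin n) : s8K m n → ℝ :=
  Sum.elim (fun p => if p.2 = j then 1 else 0) (fun _ => 0)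

def vH {m n : ℕ} (i : Fin m) : s8K m n → ℝ :=
  Sum.elim (fun p => if p.1 = i then 1 else 0) (fun i' => if i' = i then 1 else 0)

lemma kdot_scaled_sind {m n : ℕ} (c : ℝ) (k0 : s8K m n) (w : s8K m n → ℝ) :
    kdot (fun k => c * sind k0 k) w = c * w k0 := by
  classical
  have h : ∀ k, (c * sind k0 k) * w k = if k = k0 then c * w k else 0 := by
    intro k; simp only [sind]; split <;> simp
  rw [kdot]
  rw [Finset.sum_congr rfl (fun k _ => h k)]
  simp

lemma kdot_neg {K : Type*} [Fintype K] (u w : K → ℝ) :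
    kdot (fun k => -(u k)) w = - kdot u w := by
  simp [kdot, Finset.sum_neg_distrib]

lemma kdot_sub_left {K : Type*} [Fintype K] (u u' w : K → ℝ) :
    kdot (fun k => u k - u' k) w = kdot u w - kdot u' w := by
  simp [kdot, sub_mul, Finset.sum_sub_distrib]

lemma kdot_vU {m n : ℕ} (j : Fin n) (w : s8K m n → ℝ) :
    kdot (vU j) w = ∑ i, w (Sum.inl (i, j)) := by
  classical
  rw [kdot, Fintype.sum_sum_type]
  simp only [vU, Sum.elim_inl, Sum.elim_inr, zero_mul, Finset.sum_const_zero, add_zero]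
  rw [Fintype.sum_prod_type]
  apply Finset.sum_congr rfl; intro i _
  simp [ite_mul]

lemma kdot_vH {m n : ℕ} (i : Fin m) (w : s8K m n → ℝ) :
    kdot (vH i) w = (∑ j, w (Sum.inl (i, j))) + w (Sum.inr i) := by
  classical
  rw [kdot, Fintype.sum_sum_type]
  simp only [vH, Sum.elim_inl, Sum.elim_inr]
  congr 1
  · rw [Fintype.sum_prod_type, Finset.sum_comm]
    apply Finset.sum_congr rfl; intro j _
    simp [ite_mul]
  · simp [ite_mul]

section evals
variable {m n : ℕ}

lemma sum_prod_sind_inl (f : Fin m × Fin n → ℝ) (i0 : Fin m) (j0 : Fin n) :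
    ∑ p : Fin m × Fin n, f p * sind (Sum.inl p) (Sum.inl (i0, j0)) = f (i0, j0) := by
  classical
  simp only [sind, Sum.inl.injEq, Fintype.sum_prod_type, Prod.mk.injEq, Prod.ext_iff]
  simp [Finset.sum_ite_eq, Finset.sum_ite_eq', ite_and]

lemma sum_prod_sind_inr (f : Fin m × Fin n → ℝ) (i0 : Fin m) :
    ∑ p : Fin m × Fin n, f p * sind (Sum.inl p) (Sum.inr i0) = 0 := by
  simp [sind]

lemma sum_fin_sindr_inl (f : Fin m → ℝ) (p0 : Fin m × Fin n) :
    ∑ i, f i * sind (Sum.inr i) (Sum.inl p0) = 0 := by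
  simp [sind]

lemma sum_fin_sindr_inr (f : Fin m → ℝ) (i0 : Fin m) :
    ∑ i, f i * sind (m := m) (n := n) (Sum.inr i) (Sum.inr i0) = f i0 := by
  classical
  simp [sind, Sum.inr.injEq]

lemma sum_fin_vU_inl (f : Fin n → ℝ) (i0 : Fin m) (j0 : Fin n) :
    ∑ j, f j * vU j (Sum.inl (i0, j0)) = f j0 := by
  classical
  simp [vU]

lemma sum_fin_vU_inr (f : Fin n → ℝ) (i0 : Fin m) :
    ∑ j, f j * vU (m := m) j (Sum.inr i0) = 0 := by
  simp [vU]

lemma sum_fin_vH_inl (f : Fin m → ℝ) (i0 : Fin m) (j0 : Fin n) :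
    ∑ i, f i * vH i (Sum.inl (i0, j0)) = f i0 := by
  classical
  simp [vH]

lemma sum_fin_vH_inr (f : Fin m → ℝ) (i0 : Fin m) :
    ∑ i, f i * vH (n := n) i (Sum.inr i0) = f i0 := by
  classical
  simp [vH]

lemma sum_pair_inl (f : Fin m × Fin m → ℝ) (lam : Fin m → ℝ) (p0 : Fin m × Fin n) :
    ∑ p : Fin m × Fin m, f p * ((1 / lam p.2) * sind (Sum.inr p.2) (Sum.inl p0)
      - (1 / lam p.1) * sind (Sum.inr p.1) (Sum.inl p0)) = 0 := by
  simp [sind]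

lemma sum_pair_inr (f : Fin m × Fin m → ℝ) (lam : Fin m → ℝ) (i0 : Fin m) :
    ∑ p : Fin m × Fin m, f p * ((1 / lam p.2) * sind (m := m) (n := n) (Sum.inr p.2) (Sum.inr i0)
      - (1 / lam p.1) * sind (m := m) (n := n) (Sum.inr p.1) (Sum.inr i0))
    = (1 / lam i0) * ((∑ i, f (i, i0)) - ∑ i, f (i0, i)) := by
  classical
  have h : ∀ p : Fin m × Fin m, f p * ((1 / lam p.2) * sind (m := m) (n := n) (Sum.inr p.2) (Sum.inr i0)
      - (1 / lam p.1) * sind (m := m) (n := n) (Sum.inr p.1) (Sum.inr i0))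
      = f p * (1 / lam p.2) * (if i0 = p.2 then 1 else 0)
        - f p * (1 / lam p.1) * (if i0 = p.1 then 1 else 0) := by
    intro p; simp only [sind, Sum.inr.injEq]; ring
  rw [Finset.sum_congr rfl (fun p _ => h p), Finset.sum_sub_distrib]
  have e1 : ∑ p : Fin m × Fin m, f p * (1 / lam p.2) * (if i0 = p.2 then 1 else 0)
      = (1 / lam i0) * ∑ i, f (i, i0) := by
    rw [Fintype.sum_prod_type, Finset.mul_sum]
    apply Finset.sum_congr rfl; intro i _
    simp [mul_ite, eq_comm]
    ring
  have e2 : ∑ p : Fin m × Fin m, f p * (1 / lam p.1) * (if i0 = p.1 then 1 else 0)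
      = (1 / lam i0) * ∑ i, f (i0, i) := by
    rw [Fintype.sum_prod_type, Finset.sum_comm, Finset.mul_sum]
    apply Finset.sum_congr rfl; intro i _
    simp [mul_ite, eq_comm]
    ring
  rw [e1, e2]
  ring

end evals

section more
variable {m n : ℕ}

lemma kdot_smul {K : Type*} [Fintype K] (c : ℝ) (u w : K → ℝ) :
    kdot (fun k => c * u k) w = c * kdot u w := by
  simp [kdot, Finset.mul_sum, mul_assoc]

def s8c (d : Fin m → Fin n → ℝ) (φ : Fin m → ℝ) (γ : ℝ) : s8K m n → ℝ :=
  Sum.elim (fun p => γ * d p.1 p.2) (fun i => (1 - γ) * φ i)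

lemma kdot_s8c (d : Fin m → Fin n → ℝ) (φ : Fin m → ℝ) (γ : ℝ) (w : s8K m n → ℝ) :
    kdot (s8c d φ γ) w
      = γ * (∑ i, ∑ j, d i j * w (Sum.inl (i, j))) + (1 - γ) * (∑ i, φ i * w (Sum.inr i)) := by
  rw [kdot, Fintype.sum_sum_type, Fintype.sum_prod_type]
  simp only [s8c, Sum.elim_inl, Sum.elim_inr]
  congr 1
  · rw [Finset.mul_sum]
    apply Finset.sum_congr rfl; intro i _
    rw [Finset.mul_sum]
    apply Finset.sum_congr rfl; intro j _
    ring
  · rw [Finset.mul_sum]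
    apply Finset.sum_congr rfl; intro i _
    ring

open Classical in
noncomputable def s8v (lam : Fin m → ℝ) (C : Fin n → ℝ) (a : Fin m → Fin n → ℝ)
    (θ β : ℝ) (z : Fin n → ℝ) (x : Fin m → Fin n → ℝ) (q : Fin m → ℝ) :
    s8I m n → s8K m n → ℝ :=
  Sum.elim (fun p k => (if x p.1 p.2 = 0 then (1:ℝ) else 0) * sind (.inl p) k) <|
  Sum.elim (fun i k => (if q i = 0 then (1:ℝ) else 0) * sind (.inr i) k) <|
  Sum.elim (fun j k => (if (∑ i, x i j) = C j * (1 - z j) then (1:ℝ) else 0) * (-(vU j k))) <|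
  Sum.elim (fun i k => vH i k) <|
  Sum.elim (fun i k => -(vH i k)) <|
  Sum.elim (fun p k => (if x p.1 p.2 = C p.2 * a p.1 p.2 then (1:ℝ) else 0) * (-(sind (.inl p) k))) <|
  Sum.elim (fun i k => (if q i / lam i = θ then (1:ℝ) else 0) * (-((1 / lam i) * sind (.inr i) k))) <|
  Sum.elim (fun p k => (if p.1 < p.2 ∧ q p.1 / lam p.1 - q p.2 / lam p.2 = β then (1:ℝ) else 0) *
      ((1 / lam p.2) * sind (.inr p.2) k - (1 / lam p.1) * sind (.inr p.1) k)) <|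
  (fun p k => (if p.1 < p.2 ∧ q p.2 / lam p.2 - q p.1 / lam p.1 = β then (1:ℝ) else 0) *
      ((1 / lam p.1) * sind (.inr p.1) k - (1 / lam p.2) * sind (.inr p.2) k))

abbrev inA (p : Fin m × Fin n) : s8I m n := .inl p
abbrev inB (i : Fin m) : s8I m n := .inr (.inl i)
abbrev inC (j : Fin n) : s8I m n := .inr (.inr (.inl j))
abbrev inD (i : Fin m) : s8I m n := .inr (.inr (.inr (.inl i)))
abbrev inE (i : Fin m) : s8I m n := .inr (.inr (.inr (.inr (.inl i))))
abbrev inF (p : Fin m × Fin n) : s8I m n := .inr (.inr (.inr (.inr (.inr (.inl p)))))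
abbrev inG (i : Fin m) : s8I m n := .inr (.inr (.inr (.inr (.inr (.inr (.inl i))))))
abbrev inH (p : Fin m × Fin m) : s8I m n := .inr (.inr (.inr (.inr (.inr (.inr (.inr (.inl p)))))))
abbrev inI (p : Fin m × Fin m) : s8I m n := .inr (.inr (.inr (.inr (.inr (.inr (.inr (.inr p)))))))

lemma ev_lin_le {A B s : ℝ} (h : A ≤ B) (hcase : A = B → s ≤ 0) :
    ∀ᶠ t in nhdsWithin (0:ℝ) (Set.Ioi 0), A + t * s ≤ B := by
  rcases eq_or_lt_of_le h with heq | hlt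
  · filter_upwards [eventually_mem_nhdsWithin] with t ht
    have hs := hcase heq
    have ht' : (0:ℝ) < t := ht
    nlinarith
  · have hc : ContinuousAt (fun t : ℝ => A + t * s) 0 := by fun_prop
    have h2 : ∀ᶠ t in nhds (0:ℝ), A + t * s < B :=
      hc.eventually_lt continuousAt_const (by simpa using hlt)
    exact (h2.filter_mono nhdsWithin_le_nhds).mono (fun t ht => ht.le)

end more

section comps
variable {m n : ℕ} (lam : Fin m → ℝ) (C : Fin n → ℝ) (a : Fin m → Fin n → ℝ)
  (θ β : ℝ) (z : Fin n → ℝ) (x : Fin m → Fin n → ℝ) (q : Fin m → ℝ) (y : s8I m n → ℝ)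

lemma L_A_inl (i0 : Fin m) (j0 : Fin n) :
    ∑ p : Fin m × Fin n, y (inA p) * s8v lam C a θ β z x q (inA p) (Sum.inl (i0, j0))
      = (if x i0 j0 = 0 then (1:ℝ) else 0) * y (inA (i0, j0)) := by
  classical
  have e : ∀ p : Fin m × Fin n, y (inA p) * s8v lam C a θ β z x q (inA p) (Sum.inl (i0, j0))
      = (y (inA p) * (if x p.1 p.2 = 0 then (1:ℝ) else 0)) * sind (Sum.inl p) (Sum.inl (i0, j0)) := by
    intro p; simp only [s8v, inA, Sum.elim_inl]; ring
  rw [Finset.sum_congr rfl (fun p _ => e p), sum_prod_sind_inl]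
  ring

lemma L_A_inr (i0 : Fin m) :
    ∑ p : Fin m × Fin n, y (inA p) * s8v lam C a θ β z x q (inA p) (Sum.inr i0) = 0 := by
  simp [s8v, sind]

lemma L_B_inl (p0 : Fin m × Fin n) :
    ∑ i, y (inB i) * s8v lam C a θ β z x q (inB i) (Sum.inl p0) = 0 := by
  simp [s8v, sind]

lemma L_B_inr (i0 : Fin m) :
    ∑ i, y (inB i) * s8v lam C a θ β z x q (inB i) (Sum.inr i0)
      = (if q i0 = 0 then (1:ℝ) else 0) * y (inB i0) := by
  classical
  have e : ∀ i : Fin m, y (inB i) * s8v lam C a θ β z x q (inB i) (Sum.inr i0)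
      = (y (inB i) * (if q i = 0 then (1:ℝ) else 0)) * sind (m := m) (n := n) (Sum.inr i) (Sum.inr i0) := by
    intro i; simp only [s8v, inB, Sum.elim_inl, Sum.elim_inr]; ring
  rw [Finset.sum_congr rfl (fun i _ => e i), sum_fin_sindr_inr]
  ring

lemma L_C_inl (i0 : Fin m) (j0 : Fin n) :
    ∑ j, y (inC j) * s8v lam C a θ β z x q (inC j) (Sum.inl (i0, j0))
      = -((if (∑ i, x i j0) = C j0 * (1 - z j0) then (1:ℝ) else 0) * y (inC j0)) := by
  classical
  have e : ∀ j : Fin n, y (inC j) * s8v lam C a θ β z x q (inC j) (Sum.inl (i0, j0))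
      = (-(y (inC j) * (if (∑ i, x i j) = C j * (1 - z j) then (1:ℝ) else 0))) * vU j (Sum.inl (i0, j0)) := by
    intro j; simp only [s8v, inC, Sum.elim_inl, Sum.elim_inr]; ring
  rw [Finset.sum_congr rfl (fun j _ => e j), sum_fin_vU_inl]
  ring

lemma L_C_inr (i0 : Fin m) :
    ∑ j, y (inC j) * s8v lam C a θ β z x q (inC j) (Sum.inr i0) = 0 := by
  simp [s8v, vU]

lemma L_D_inl (i0 : Fin m) (j0 : Fin n) :
    ∑ i, y (inD i) * s8v lam C a θ β z x q (inD i) (Sum.inl (i0, j0)) = y (inD i0) := by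
  classical
  have e : ∀ i : Fin m, y (inD i) * s8v lam C a θ β z x q (inD i) (Sum.inl (i0, j0))
      = y (inD i) * vH i (Sum.inl (i0, j0)) := by
    intro i; simp only [s8v, inD, Sum.elim_inl, Sum.elim_inr]
  rw [Finset.sum_congr rfl (fun i _ => e i), sum_fin_vH_inl]

lemma L_D_inr (i0 : Fin m) :
    ∑ i, y (inD i) * s8v lam C a θ β z x q (inD i) (Sum.inr i0) = y (inD i0) := by
  classical
  have e : ∀ i : Fin m, y (inD i) * s8v lam C a θ β z x q (inD i) (Sum.inr i0)
      = y (inD i) * vH (n := n) i (Sum.inr i0) := by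
    intro i; simp only [s8v, inD, Sum.elim_inl, Sum.elim_inr]
  rw [Finset.sum_congr rfl (fun i _ => e i), sum_fin_vH_inr]

lemma L_E_inl (i0 : Fin m) (j0 : Fin n) :
    ∑ i, y (inE i) * s8v lam C a θ β z x q (inE i) (Sum.inl (i0, j0)) = -(y (inE i0)) := by
  classical
  have e : ∀ i : Fin m, y (inE i) * s8v lam C a θ β z x q (inE i) (Sum.inl (i0, j0))
      = (-(y (inE i))) * vH i (Sum.inl (i0, j0)) := by
    intro i; simp only [s8v, inE, Sum.elim_inl, Sum.elim_inr]; ring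
  rw [Finset.sum_congr rfl (fun i _ => e i), sum_fin_vH_inl]

lemma L_E_inr (i0 : Fin m) :
    ∑ i, y (inE i) * s8v lam C a θ β z x q (inE i) (Sum.inr i0) = -(y (inE i0)) := by
  classical
  have e : ∀ i : Fin m, y (inE i) * s8v lam C a θ β z x q (inE i) (Sum.inr i0)
      = (-(y (inE i))) * vH (n := n) i (Sum.inr i0) := by
    intro i; simp only [s8v, inE, Sum.elim_inl, Sum.elim_inr]; ring
  rw [Finset.sum_congr rfl (fun i _ => e i), sum_fin_vH_inr]

lemma L_F_inl (i0 : Fin m) (j0 : Fin n) :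
    ∑ p : Fin m × Fin n, y (inF p) * s8v lam C a θ β z x q (inF p) (Sum.inl (i0, j0))
      = -((if x i0 j0 = C j0 * a i0 j0 then (1:ℝ) else 0) * y (inF (i0, j0))) := by
  classical
  have e : ∀ p : Fin m × Fin n, y (inF p) * s8v lam C a θ β z x q (inF p) (Sum.inl (i0, j0))
      = (-(y (inF p) * (if x p.1 p.2 = C p.2 * a p.1 p.2 then (1:ℝ) else 0))) * sind (Sum.inl p) (Sum.inl (i0, j0)) := by
    intro p; simp only [s8v, inF, Sum.elim_inl, Sum.elim_inr]; ring
  rw [Finset.sum_congr rfl (fun p _ => e p), sum_prod_sind_inl]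
  ring

lemma L_F_inr (i0 : Fin m) :
    ∑ p : Fin m × Fin n, y (inF p) * s8v lam C a θ β z x q (inF p) (Sum.inr i0) = 0 := by
  simp [s8v, sind]

lemma L_G_inl (p0 : Fin m × Fin n) :
    ∑ i, y (inG i) * s8v lam C a θ β z x q (inG i) (Sum.inl p0) = 0 := by
  simp [s8v, sind]

lemma L_G_inr (i0 : Fin m) :
    ∑ i, y (inG i) * s8v lam C a θ β z x q (inG i) (Sum.inr i0)
      = -((1 / lam i0) * ((if q i0 / lam i0 = θ then (1:ℝ) else 0) * y (inG i0))) := by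
  classical
  have e : ∀ i : Fin m, y (inG i) * s8v lam C a θ β z x q (inG i) (Sum.inr i0)
      = (-(y (inG i) * (if q i / lam i = θ then (1:ℝ) else 0) * (1 / lam i))) * sind (m := m) (n := n) (Sum.inr i) (Sum.inr i0) := by
    intro i; simp only [s8v, inG, Sum.elim_inl, Sum.elim_inr]; ring
  rw [Finset.sum_congr rfl (fun i _ => e i), sum_fin_sindr_inr]
  ring

lemma L_H_inl (p0 : Fin m × Fin n) :
    ∑ p : Fin m × Fin m, y (inH p) * s8v lam C a θ β z x q (inH p) (Sum.inl p0) = 0 := by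
  simp [s8v, sind]

lemma L_H_inr (i0 : Fin m) :
    ∑ p : Fin m × Fin m, y (inH p) * s8v lam C a θ β z x q (inH p) (Sum.inr i0)
      = (1 / lam i0) * ((∑ l, (if l < i0 ∧ q l / lam l - q i0 / lam i0 = β then (1:ℝ) else 0) * y (inH (l, i0)))
          - (∑ l, (if i0 < l ∧ q i0 / lam i0 - q l / lam l = β then (1:ℝ) else 0) * y (inH (i0, l)))) := by
  classical
  have e : ∀ p : Fin m × Fin m, y (inH p) * s8v lam C a θ β z x q (inH p) (Sum.inr i0)
      = (y (inH p) * (if p.1 < p.2 ∧ q p.1 / lam p.1 - q p.2 / lam p.2 = β then (1:ℝ) else 0)) *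
          ((1 / lam p.2) * sind (m := m) (n := n) (Sum.inr p.2) (Sum.inr i0)
            - (1 / lam p.1) * sind (m := m) (n := n) (Sum.inr p.1) (Sum.inr i0)) := by
    intro p; simp only [s8v, inH, Sum.elim_inl, Sum.elim_inr]; ring
  rw [Finset.sum_congr rfl (fun p _ => e p), sum_pair_inr]
  congr 1
  congr 1
  · apply Finset.sum_congr rfl; intro l _; ring
  · apply Finset.sum_congr rfl; intro l _; ring

lemma L_I_inl (p0 : Fin m × Fin n) :
    ∑ p : Fin m × Fin m, y (inI p) * s8v lam C a θ β z x q (inI p) (Sum.inl p0) = 0 := by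
  simp [s8v, sind]

lemma L_I_inr (i0 : Fin m) :
    ∑ p : Fin m × Fin m, y (inI p) * s8v lam C a θ β z x q (inI p) (Sum.inr i0)
      = (1 / lam i0) * ((∑ l, (if i0 < l ∧ q l / lam l - q i0 / lam i0 = β then (1:ℝ) else 0) * y (inI (i0, l)))
          - (∑ l, (if l < i0 ∧ q i0 / lam i0 - q l / lam l = β then (1:ℝ) else 0) * y (inI (l, i0)))) := by
  classical
  have e : ∀ p : Fin m × Fin m, y (inI p) * s8v lam C a θ β z x q (inI p) (Sum.inr i0)
      = (-(y (inI p) * (if p.1 < p.2 ∧ q p.2 / lam p.2 - q p.1 / lam p.1 = β then (1:ℝ) else 0))) *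
          ((1 / lam p.2) * sind (m := m) (n := n) (Sum.inr p.2) (Sum.inr i0)
            - (1 / lam p.1) * sind (m := m) (n := n) (Sum.inr p.1) (Sum.inr i0)) := by
    intro p; simp only [s8v, inI, Sum.elim_inl, Sum.elim_inr]; ring
  rw [Finset.sum_congr rfl (fun p _ => e p), sum_pair_inr]
  have A1 : (∑ i : Fin m, -(y (inI (i, i0)) *
        if (i, i0).1 < (i, i0).2 ∧ q (i, i0).2 / lam (i, i0).2 - q (i, i0).1 / lam (i, i0).1 = β then (1:ℝ) else 0))
      = - ∑ l, (if l < i0 ∧ q i0 / lam i0 - q l / lam l = β then (1:ℝ) else 0) * y (inI (l, i0)) := by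
    rw [← Finset.sum_neg_distrib]; apply Finset.sum_congr rfl; intro l _; simp only; ring
  have A2 : (∑ i : Fin m, -(y (inI (i0, i)) *
        if (i0, i).1 < (i0, i).2 ∧ q (i0, i).2 / lam (i0, i).2 - q (i0, i).1 / lam (i0, i).1 = β then (1:ℝ) else 0))
      = - ∑ l, (if i0 < l ∧ q l / lam l - q i0 / lam i0 = β then (1:ℝ) else 0) * y (inI (i0, l)) := by
    rw [← Finset.sum_neg_distrib]; apply Finset.sum_congr rfl; intro l _; simp only; ring
  rw [A1, A2]
  ring

end comps

section kdots
variable {m n : ℕ}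

lemma sum_sind (k0 : s8K m n) (w : s8K m n → ℝ) : ∑ k, sind k0 k * w k = w k0 := by
  classical
  simp [sind, ite_mul]

lemma kdot_gate_negvU (c : ℝ) (j : Fin n) (w : s8K m n → ℝ) :
    kdot (fun k => c * (-(vU j k))) w = -(c * ∑ i, w (Sum.inl (i, j))) := by
  have e : ∀ k, (c * (-(vU j k))) * w k = (-c) * (vU j k * w k) := fun k => by ring
  rw [kdot, Finset.sum_congr rfl (fun k _ => e k), ← Finset.mul_sum,
    show (∑ k, vU j k * w k) = kdot (vU j) w from rfl, kdot_vU]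
  ring

lemma kdot_neg_vH (i : Fin m) (w : s8K m n → ℝ) :
    kdot (fun k => -(vH i k)) w = -((∑ j, w (Sum.inl (i, j))) + w (Sum.inr i)) := by
  have e : ∀ k, (-(vH i k)) * w k = (-1 : ℝ) * (vH i k * w k) := fun k => by ring
  rw [kdot, Finset.sum_congr rfl (fun k _ => e k), ← Finset.mul_sum,
    show (∑ k, vH i k * w k) = kdot (vH i) w from rfl, kdot_vH]
  ring

lemma kdot_vH' (i : Fin m) (w : s8K m n → ℝ) :
    kdot (fun k => vH i k) w = (∑ j, w (Sum.inl (i, j))) + w (Sum.inr i) := by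
  rw [show (fun k => vH (m := m) (n := n) i k) = vH i from rfl, kdot_vH]

lemma kdot_gate_negsind (c : ℝ) (k0 : s8K m n) (w : s8K m n → ℝ) :
    kdot (fun k => c * (-(sind k0 k))) w = -(c * w k0) := by
  have e : ∀ k, (c * (-(sind k0 k))) * w k = (-c) * (sind k0 k * w k) := fun k => by ring
  rw [kdot, Finset.sum_congr rfl (fun k _ => e k), ← Finset.mul_sum, sum_sind]
  ring

lemma kdot_gate_negscaledsind (c r : ℝ) (k0 : s8K m n) (w : s8K m n → ℝ) :
    kdot (fun k => c * (-(r * sind k0 k))) w = -(c * (r * w k0)) := by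
  have e : ∀ k, (c * (-(r * sind k0 k))) * w k = (-(c * r)) * (sind k0 k * w k) := fun k => by ring
  rw [kdot, Finset.sum_congr rfl (fun k _ => e k), ← Finset.mul_sum, sum_sind]
  ring

lemma kdot_gate_pair (c r1 r2 : ℝ) (k1 k2 : s8K m n) (w : s8K m n → ℝ) :
    kdot (fun k => c * (r1 * sind k1 k - r2 * sind k2 k)) w = c * (r1 * w k1 - r2 * w k2) := by
  have e : ∀ k, (c * (r1 * sind k1 k - r2 * sind k2 k)) * w k
      = (c * r1) * (sind k1 k * w k) - (c * r2) * (sind k2 k * w k) := fun k => by ring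
  rw [kdot, Finset.sum_congr rfl (fun k _ => e k), Finset.sum_sub_distrib,
    ← Finset.mul_sum, ← Finset.mul_sum, sum_sind, sum_sind]
  ring

lemma s8_split (y : s8I m n → ℝ) (v : s8I m n → s8K m n → ℝ) (k0 : s8K m n) :
    ∑ i : s8I m n, y i * v i k0
      = (∑ p : Fin m × Fin n, y (inA p) * v (inA p) k0)
      + (∑ i, y (inB i) * v (inB i) k0)
      + (∑ j, y (inC j) * v (inC j) k0)
      + (∑ i, y (inD i) * v (inD i) k0)
      + (∑ i, y (inE i) * v (inE i) k0)
      + (∑ p : Fin m × Fin n, y (inF p) * v (inF p) k0)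
      + (∑ i, y (inG i) * v (inG i) k0)
      + (∑ p : Fin m × Fin m, y (inH p) * v (inH p) k0)
      + (∑ p : Fin m × Fin m, y (inI p) * v (inI p) k0) := by
  simp only [Fintype.sum_sum_type]
  ring

end kdots

theorem fwd_dir
    (m n : ℕ)
    (lam : Fin m → ℝ) (hlam : ∀ i, 0 < lam i)
    (C : Fin n → ℝ)
    (d : Fin m → Fin n → ℝ)
    (φ : Fin m → ℝ)
    (a : Fin m → Fin n → ℝ)
    (γ : ℝ)
    (θ β : ℝ) (hβ : 0 ≤ β)
    (z : Fin n → ℝ)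
    (x : Fin m → Fin n → ℝ) (q : Fin m → ℝ)
    (hxq : (x, q) ∈ Feas lam C a θ β z)
    (hopt : ∀ p ∈ Feas lam C a θ β z, cost d φ γ (x, q) ≤ cost d φ γ p) :
    ∃ (μ : Fin m → ℝ) (π : Fin n → ℝ) (σ : Fin m → Fin n → ℝ) (ν : Fin m → ℝ)
      (η τ : Fin m → Fin m → ℝ),
      (∀ j, 0 ≤ π j) ∧ (∀ i j, 0 ≤ σ i j) ∧ (∀ i, 0 ≤ ν i) ∧
      (∀ i i' : Fin m, i < i' → 0 ≤ η i i') ∧ (∀ i i' : Fin m, i < i' → 0 ≤ τ i i') ∧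
      (∀ i j, 0 ≤ γ * d i j + π j + μ i + σ i j) ∧
      (∀ i j, (γ * d i j + π j + μ i + σ i j) * x i j = 0) ∧
      (∀ i, 0 ≤ (1 - γ) * φ i + μ i
          + (1 / lam i) * (∑ l ∈ Finset.univ.filter (fun l => i < l), (η i l - τ i l))
          - (1 / lam i) * (∑ l ∈ Finset.univ.filter (fun l => l < i), (η l i - τ l i))
          + ν i / lam i) ∧
      (∀ i, ((1 - γ) * φ i + μ i
          + (1 / lam i) * (∑ l ∈ Finset.univ.filter (fun l => i < l), (η i l - τ i l))
          - (1 / lam i) * (∑ l ∈ Finset.univ.filter (fun l => l < i), (η l i - τ l i))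
          + ν i / lam i) * q i = 0) ∧
      (∀ j, π j * (C j * (1 - z j) - ∑ i, x i j) = 0) ∧
      (∀ i j, σ i j * (C j * a i j - x i j) = 0) ∧
      (∀ i, ν i * (θ - q i / lam i) = 0) ∧
      (∀ i i' : Fin m, i < i' → η i i' * (β - q i / lam i + q i' / lam i') = 0) ∧
      (∀ i i' : Fin m, i < i' → τ i i' * (q i / lam i - q i' / lam i' + β) = 0) := by
  classical
  obtain ⟨hx1, hq1, hx3, hx4, hx5, hq6, hq7⟩ := hxq
  simp only at hx1 hq1 hx3 hx4 hx5 hq6 hq7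
  -- Farkas hypothesis
  have hfark : ∀ w : s8K m n → ℝ,
      (∀ i ∈ Finset.univ, 0 ≤ kdot (s8v lam C a θ β z x q i) w) → 0 ≤ kdot (s8c d φ γ) w := by
    intro w hw
    have cond1 : ∀ i j, x i j = 0 → 0 ≤ w (Sum.inl (i, j)) := by
      intro i j h0
      have h := hw (inA (i, j)) (Finset.mem_univ _)
      simp only [s8v, inA, Sum.elim_inl] at h
      rw [kdot_scaled_sind] at h
      rw [if_pos h0, one_mul] at h
      exact h
    have cond2 : ∀ i, q i = 0 → 0 ≤ w (Sum.inr i) := by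
      intro i h0
      have h := hw (inB i) (Finset.mem_univ _)
      simp only [s8v, inB, Sum.elim_inl, Sum.elim_inr] at h
      rw [kdot_scaled_sind] at h
      rw [if_pos h0, one_mul] at h
      exact h
    have cond3 : ∀ j, (∑ i, x i j) = C j * (1 - z j) → ∑ i, w (Sum.inl (i, j)) ≤ 0 := by
      intro j h0
      have h := hw (inC j) (Finset.mem_univ _)
      simp only [s8v, inC, Sum.elim_inl, Sum.elim_inr] at h
      rw [kdot_gate_negvU] at h
      rw [if_pos h0, one_mul] at h
      linarith
    have cond4 : ∀ i, (∑ j, w (Sum.inl (i, j))) + w (Sum.inr i) = 0 := by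
      intro i
      have h1 := hw (inD i) (Finset.mem_univ _)
      have h2 := hw (inE i) (Finset.mem_univ _)
      simp only [s8v, inD, inE, Sum.elim_inl, Sum.elim_inr] at h1 h2
      rw [kdot_vH'] at h1
      rw [kdot_neg_vH] at h2
      linarith
    have cond5 : ∀ i j, x i j = C j * a i j → w (Sum.inl (i, j)) ≤ 0 := by
      intro i j h0
      have h := hw (inF (i, j)) (Finset.mem_univ _)
      simp only [s8v, inF, Sum.elim_inl, Sum.elim_inr] at h
      rw [kdot_gate_negsind] at h
      rw [if_pos h0, one_mul] at h
      linarith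
    have cond6 : ∀ i, q i / lam i = θ → w (Sum.inr i) ≤ 0 := by
      intro i h0
      have h := hw (inG i) (Finset.mem_univ _)
      simp only [s8v, inG, Sum.elim_inl, Sum.elim_inr] at h
      rw [kdot_gate_negscaledsind] at h
      rw [if_pos h0, one_mul] at h
      by_contra hpos
      push_neg at hpos
      have hli : 0 < 1 / lam i := one_div_pos.mpr (hlam i)
      nlinarith
    have cond7 : ∀ i i' : Fin m, i < i' → q i / lam i - q i' / lam i' = β →
        w (Sum.inr i) / lam i - w (Sum.inr i') / lam i' ≤ 0 := by
      intro i i' hlt h0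
      have h := hw (inH (i, i')) (Finset.mem_univ _)
      simp only [s8v, inH, Sum.elim_inl, Sum.elim_inr] at h
      rw [kdot_gate_pair] at h
      rw [if_pos ⟨hlt, h0⟩, one_mul] at h
      have e1 : w (Sum.inr i) / lam i = (1 / lam i) * w (Sum.inr i) := by ring
      have e2 : w (Sum.inr i') / lam i' = (1 / lam i') * w (Sum.inr i') := by ring
      rw [e1, e2]
      linarith
    have cond8 : ∀ i i' : Fin m, i < i' → q i' / lam i' - q i / lam i = β →
        w (Sum.inr i') / lam i' - w (Sum.inr i) / lam i ≤ 0 := by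
      intro i i' hlt h0
      have h := hw (inI (i, i')) (Finset.mem_univ _)
      simp only [s8v, inI, Sum.elim_inl, Sum.elim_inr] at h
      rw [kdot_gate_pair] at h
      rw [if_pos ⟨hlt, h0⟩, one_mul] at h
      have e1 : w (Sum.inr i) / lam i = (1 / lam i) * w (Sum.inr i) := by ring
      have e2 : w (Sum.inr i') / lam i' = (1 / lam i') * w (Sum.inr i') := by ring
      rw [e1, e2]
      linarith
    -- eventual feasibility
    have P1 : ∀ᶠ t in nhdsWithin (0:ℝ) (Set.Ioi 0),
        ∀ i j, 0 ≤ x i j + t * w (Sum.inl (i, j)) := by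
      rw [Filter.eventually_all]; intro i
      rw [Filter.eventually_all]; intro j
      have hev := ev_lin_le (A := -(x i j)) (B := 0) (s := -(w (Sum.inl (i, j))))
        (by linarith [hx1 i j]) (fun heq => by
          have h0 : x i j = 0 := by linarith
          linarith [cond1 i j h0])
      exact hev.mono (fun t ht => by linarith)
    have P2 : ∀ᶠ t in nhdsWithin (0:ℝ) (Set.Ioi 0),
        ∀ i, 0 ≤ q i + t * w (Sum.inr i) := by
      rw [Filter.eventually_all]; intro i
      have hev := ev_lin_le (A := -(q i)) (B := 0) (s := -(w (Sum.inr i)))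
        (by linarith [hq1 i]) (fun heq => by
          have h0 : q i = 0 := by linarith
          linarith [cond2 i h0])
      exact hev.mono (fun t ht => by linarith)
    have P3 : ∀ᶠ t in nhdsWithin (0:ℝ) (Set.Ioi 0),
        ∀ j, ∑ i, (x i j + t * w (Sum.inl (i, j))) ≤ C j * (1 - z j) := by
      rw [Filter.eventually_all]; intro j
      have hev := ev_lin_le (A := ∑ i, x i j) (B := C j * (1 - z j))
        (s := ∑ i, w (Sum.inl (i, j))) (hx3 j) (cond3 j)
      refine hev.mono (fun t ht => ?_)
      have e : ∑ i, (x i j + t * w (Sum.inl (i, j)))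
          = (∑ i, x i j) + t * ∑ i, w (Sum.inl (i, j)) := by
        rw [Finset.sum_add_distrib, Finset.mul_sum]
      rw [e]; exact ht
    have P4 : ∀ᶠ t in nhdsWithin (0:ℝ) (Set.Ioi 0),
        ∀ i, (∑ j, (x i j + t * w (Sum.inl (i, j)))) + (q i + t * w (Sum.inr i)) = lam i := by
      refine Filter.Eventually.of_forall (fun t i => ?_)
      have e : ∑ j, (x i j + t * w (Sum.inl (i, j)))
          = (∑ j, x i j) + t * ∑ j, w (Sum.inl (i, j)) := by
        rw [Finset.sum_add_distrib, Finset.mul_sum]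
      rw [e]
      have h1 := cond4 i
      have h2 := hx4 i
      have h3 : t * (∑ j, w (Sum.inl (i, j))) + t * w (Sum.inr i)
          = t * ((∑ j, w (Sum.inl (i, j))) + w (Sum.inr i)) := by ring
      rw [h1, mul_zero] at h3
      linarith
    have P5 : ∀ᶠ t in nhdsWithin (0:ℝ) (Set.Ioi 0),
        ∀ i j, x i j + t * w (Sum.inl (i, j)) ≤ C j * a i j := by
      rw [Filter.eventually_all]; intro i
      rw [Filter.eventually_all]; intro j
      exact ev_lin_le (hx5 i j) (cond5 i j)
    have P6 : ∀ᶠ t in nhdsWithin (0:ℝ) (Set.Ioi 0),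
        ∀ i, (q i + t * w (Sum.inr i)) / lam i ≤ θ := by
      rw [Filter.eventually_all]; intro i
      have hev := ev_lin_le (A := q i / lam i) (B := θ) (s := w (Sum.inr i) / lam i)
        (hq6 i) (fun heq => by
          have h0 := cond6 i heq
          rw [div_nonpos_iff]; right; exact ⟨h0, (hlam i).le⟩)
      refine hev.mono (fun t ht => ?_)
      have e : (q i + t * w (Sum.inr i)) / lam i
          = q i / lam i + t * (w (Sum.inr i) / lam i) := by
        rw [add_div, mul_div_assoc]
      rw [e]; exact ht
    have P7' : ∀ i i' : Fin m, i < i' → ∀ᶠ t in nhdsWithin (0:ℝ) (Set.Ioi 0),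
        |(q i + t * w (Sum.inr i)) / lam i - (q i' + t * w (Sum.inr i')) / lam i'| ≤ β := by
      intro i i' hlt
      have habs := abs_le.mp (hq7 i i')
      have hup := ev_lin_le (A := q i / lam i - q i' / lam i') (B := β)
        (s := w (Sum.inr i) / lam i - w (Sum.inr i') / lam i') habs.2
        (fun heq => by linarith [cond7 i i' hlt heq])
      have hlo := ev_lin_le (A := -(q i / lam i - q i' / lam i')) (B := β)
        (s := -(w (Sum.inr i) / lam i - w (Sum.inr i') / lam i'))
        (by linarith [habs.1])
        (fun heq => by
          have h0 : q i' / lam i' - q i / lam i = β := by linarith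
          linarith [cond8 i i' hlt h0])
      refine (hup.and hlo).mono (fun t ht => ?_)
      have e : (q i + t * w (Sum.inr i)) / lam i - (q i' + t * w (Sum.inr i')) / lam i'
          = (q i / lam i - q i' / lam i')
            + t * (w (Sum.inr i) / lam i - w (Sum.inr i') / lam i') := by
        rw [add_div, add_div, mul_div_assoc, mul_div_assoc]; ring
      rw [abs_le, e]
      constructor
      · nlinarith [ht.2]
      · exact ht.1
    have P7 : ∀ᶠ t in nhdsWithin (0:ℝ) (Set.Ioi 0),
        ∀ i i' : Fin m, |(q i + t * w (Sum.inr i)) / lam i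
          - (q i' + t * w (Sum.inr i')) / lam i'| ≤ β := by
      rw [Filter.eventually_all]; intro i
      rw [Filter.eventually_all]; intro i'
      rcases lt_trichotomy i i' with hlt | heq | hgt
      · exact P7' i i' hlt
      · subst heq
        refine Filter.Eventually.of_forall (fun t => ?_)
        rw [sub_self, abs_zero]
        exact hβ
      · exact (P7' i' i hgt).mono (fun t ht => by rw [abs_sub_comm]; exact ht)
    have hfeas : ∀ᶠ t in nhdsWithin (0:ℝ) (Set.Ioi 0),
        ((fun i j => x i j + t * w (Sum.inl (i, j)), fun i => q i + t * w (Sum.inr i)) :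
          (Fin m → Fin n → ℝ) × (Fin m → ℝ)) ∈ Feas lam C a θ β z := by
      filter_upwards [P1, P2, P3, P4, P5, P6, P7] with t h1 h2 h3 h4 h5 h6 h7
      exact ⟨h1, h2, h3, h4, h5, h6, h7⟩
    obtain ⟨t, htf, htpos⟩ := (hfeas.and eventually_mem_nhdsWithin).exists
    have hle := hopt _ htf
    have hcost : cost d φ γ (fun i j => x i j + t * w (Sum.inl (i, j)),
        fun i => q i + t * w (Sum.inr i)) = cost d φ γ (x, q) + t * kdot (s8c d φ γ) w := by
      rw [kdot_s8c]
      simp only [cost]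
      have e1 : ∑ i, φ i * (q i + t * w (Sum.inr i))
          = (∑ i, φ i * q i) + t * ∑ i, φ i * w (Sum.inr i) := by
        rw [Finset.mul_sum, ← Finset.sum_add_distrib]
        exact Finset.sum_congr rfl (fun i _ => by ring)
      have e2 : ∑ i, ∑ j, d i j * (x i j + t * w (Sum.inl (i, j)))
          = (∑ i, ∑ j, d i j * x i j) + t * ∑ i, ∑ j, d i j * w (Sum.inl (i, j)) := by
        rw [Finset.mul_sum, ← Finset.sum_add_distrib]
        refine Finset.sum_congr rfl (fun i _ => ?_)
        rw [Finset.mul_sum, ← Finset.sum_add_distrib]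
        exact Finset.sum_congr rfl (fun j _ => by ring)
      rw [e1, e2]
      ring
    rw [hcost] at hle
    have htpos' : (0:ℝ) < t := htpos
    nlinarith [hle]
  -- apply Farkas
  obtain ⟨y, hy, hcy⟩ := farkas Finset.univ (s8v lam C a θ β z x q) (s8c d φ γ) hfark
  -- coordinate identities
  have coordx : ∀ (i0 : Fin m) (j0 : Fin n), γ * d i0 j0
      = (if x i0 j0 = 0 then (1:ℝ) else 0) * y (inA (i0, j0))
        - (if (∑ i, x i j0) = C j0 * (1 - z j0) then (1:ℝ) else 0) * y (inC j0)
        + y (inD i0) - y (inE i0)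
        - (if x i0 j0 = C j0 * a i0 j0 then (1:ℝ) else 0) * y (inF (i0, j0)) := by
    intro i0 j0
    have h := hcy (Sum.inl (i0, j0))
    rw [show (∑ i ∈ Finset.univ, y i * s8v lam C a θ β z x q i (Sum.inl (i0, j0)))
        = ∑ i : s8I m n, y i * s8v lam C a θ β z x q i (Sum.inl (i0, j0)) from rfl,
      s8_split] at h
    rw [L_A_inl, L_B_inl, L_C_inl, L_D_inl, L_E_inl, L_F_inl, L_G_inl, L_H_inl, L_I_inl] at h
    rw [show s8c d φ γ (Sum.inl (i0, j0)) = γ * d i0 j0 from rfl] at h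
    linarith
  have coordq : ∀ i0 : Fin m, (1 - γ) * φ i0
      = (if q i0 = 0 then (1:ℝ) else 0) * y (inB i0)
        + y (inD i0) - y (inE i0)
        - (1 / lam i0) * ((if q i0 / lam i0 = θ then (1:ℝ) else 0) * y (inG i0))
        + (1 / lam i0) * ((∑ l, (if l < i0 ∧ q l / lam l - q i0 / lam i0 = β then (1:ℝ) else 0) * y (inH (l, i0)))
            - (∑ l, (if i0 < l ∧ q i0 / lam i0 - q l / lam l = β then (1:ℝ) else 0) * y (inH (i0, l))))
        + (1 / lam i0) * ((∑ l, (if i0 < l ∧ q l / lam l - q i0 / lam i0 = β then (1:ℝ) else 0) * y (inI (i0, l)))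
            - (∑ l, (if l < i0 ∧ q i0 / lam i0 - q l / lam l = β then (1:ℝ) else 0) * y (inI (l, i0)))) := by
    intro i0
    have h := hcy (Sum.inr i0)
    rw [show (∑ i ∈ Finset.univ, y i * s8v lam C a θ β z x q i (Sum.inr i0))
        = ∑ i : s8I m n, y i * s8v lam C a θ β z x q i (Sum.inr i0) from rfl,
      s8_split] at h
    rw [L_A_inr, L_B_inr, L_C_inr, L_D_inr, L_E_inr, L_F_inr, L_G_inr, L_H_inr, L_I_inr] at h
    rw [show s8c d φ γ (Sum.inr i0) = (1 - γ) * φ i0 from rfl] at h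
    linarith
  refine ⟨fun i => y (inE i) - y (inD i),
    fun j => (if (∑ i, x i j) = C j * (1 - z j) then (1:ℝ) else 0) * y (inC j),
    fun i j => (if x i j = C j * a i j then (1:ℝ) else 0) * y (inF (i, j)),
    fun i => (if q i / lam i = θ then (1:ℝ) else 0) * y (inG i),
    fun i i' => (if i < i' ∧ q i / lam i - q i' / lam i' = β then (1:ℝ) else 0) * y (inH (i, i')),
    fun i i' => (if i < i' ∧ q i' / lam i' - q i / lam i = β then (1:ℝ) else 0) * y (inI (i, i')),
    ?_, ?_, ?_, ?_, ?_, ?_, ?_, ?_, ?_, ?_, ?_, ?_, ?_, ?_⟩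
  · intro j; exact mul_nonneg (by split <;> norm_num) (hy _)
  · intro i j; exact mul_nonneg (by split <;> norm_num) (hy _)
  · intro i; exact mul_nonneg (by split <;> norm_num) (hy _)
  · intro i i' _; exact mul_nonneg (by split <;> norm_num) (hy _)
  · intro i i' _; exact mul_nonneg (by split <;> norm_num) (hy _)
  · -- stationarity in x
    intro i j
    beta_reduce
    have h := coordx i j
    have h0 : 0 ≤ (if x i j = 0 then (1:ℝ) else 0) * y (inA (i, j)) :=
      mul_nonneg (by split <;> norm_num) (hy _)
    linarith
  · -- CS in x
    intro i j
    beta_reduce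
    by_cases h0 : x i j = 0
    · rw [h0, mul_zero]
    · have hgate : (if x i j = 0 then (1:ℝ) else 0) = 0 := if_neg h0
      have h := coordx i j
      rw [hgate, zero_mul] at h
      have hz2 : γ * d i j
          + (if (∑ i', x i' j) = C j * (1 - z j) then (1:ℝ) else 0) * y (inC j)
          + (y (inE i) - y (inD i))
          + (if x i j = C j * a i j then (1:ℝ) else 0) * y (inF (i, j)) = 0 := by
        linarith
      rw [hz2, zero_mul]
  · -- stationarity in q
    intro i
    beta_reduce
    have h := coordq i
    have hηf : (∑ l ∈ Finset.univ.filter (fun l => i < l),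
        ((if i < l ∧ q i / lam i - q l / lam l = β then (1:ℝ) else 0) * y (inH (i, l))
          - (if i < l ∧ q l / lam l - q i / lam i = β then (1:ℝ) else 0) * y (inI (i, l))))
        = (∑ l, (if i < l ∧ q i / lam i - q l / lam l = β then (1:ℝ) else 0) * y (inH (i, l)))
          - (∑ l, (if i < l ∧ q l / lam l - q i / lam i = β then (1:ℝ) else 0) * y (inI (i, l))) := by
      rw [Finset.sum_filter_of_ne, Finset.sum_sub_distrib]
      intro l _ hne
      by_contra hnl
      apply hne
      rw [if_neg (fun hc => hnl hc.1), if_neg (fun hc => hnl hc.1)]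
      ring
    have hτf : (∑ l ∈ Finset.univ.filter (fun l => l < i),
        ((if l < i ∧ q l / lam l - q i / lam i = β then (1:ℝ) else 0) * y (inH (l, i))
          - (if l < i ∧ q i / lam i - q l / lam l = β then (1:ℝ) else 0) * y (inI (l, i))))
        = (∑ l, (if l < i ∧ q l / lam l - q i / lam i = β then (1:ℝ) else 0) * y (inH (l, i)))
          - (∑ l, (if l < i ∧ q i / lam i - q l / lam l = β then (1:ℝ) else 0) * y (inI (l, i))) := by
      rw [Finset.sum_filter_of_ne, Finset.sum_sub_distrib]
      intro l _ hne
      by_contra hnl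
      apply hne
      rw [if_neg (fun hc => hnl hc.1), if_neg (fun hc => hnl hc.1)]
      ring
    have hdiv : ((if q i / lam i = θ then (1:ℝ) else 0) * y (inG i)) / lam i
        = (1 / lam i) * ((if q i / lam i = θ then (1:ℝ) else 0) * y (inG i)) := by ring
    have h0 : 0 ≤ (if q i = 0 then (1:ℝ) else 0) * y (inB i) :=
      mul_nonneg (by split <;> norm_num) (hy _)
    rw [hηf, hτf, hdiv]
    set Bg := (if q i = 0 then (1:ℝ) else 0) * y (inB i) with hBg
    set G := (if q i / lam i = θ then (1:ℝ) else 0) * y (inG i) with hG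
    set S1 := ∑ l, (if l < i ∧ q l / lam l - q i / lam i = β then (1:ℝ) else 0) * y (inH (l, i)) with hS1
    set S2 := ∑ l, (if i < l ∧ q i / lam i - q l / lam l = β then (1:ℝ) else 0) * y (inH (i, l)) with hS2
    set S3 := ∑ l, (if i < l ∧ q l / lam l - q i / lam i = β then (1:ℝ) else 0) * y (inI (i, l)) with hS3
    set S4 := ∑ l, (if l < i ∧ q i / lam i - q l / lam l = β then (1:ℝ) else 0) * y (inI (l, i)) with hS4
    have hexp1 : (1 / lam i) * (S1 - S2) = (1 / lam i) * S1 - (1 / lam i) * S2 := by ring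
    have hexp2 : (1 / lam i) * (S3 - S4) = (1 / lam i) * S3 - (1 / lam i) * S4 := by ring
    have hexp3 : (1 / lam i) * (S2 - S3) = (1 / lam i) * S2 - (1 / lam i) * S3 := by ring
    have hexp4 : (1 / lam i) * (S1 - S4) = (1 / lam i) * S1 - (1 / lam i) * S4 := by ring
    linarith [h, h0, hexp1, hexp2, hexp3, hexp4]
  · -- CS in q
    intro i
    beta_reduce
    by_cases h0 : q i = 0
    · rw [h0, mul_zero]
    · apply mul_eq_zero_of_left
      have h := coordq i
      rw [if_neg h0, zero_mul] at h
      have hηf : (∑ l ∈ Finset.univ.filter (fun l => i < l),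
          ((if i < l ∧ q i / lam i - q l / lam l = β then (1:ℝ) else 0) * y (inH (i, l))
            - (if i < l ∧ q l / lam l - q i / lam i = β then (1:ℝ) else 0) * y (inI (i, l))))
          = (∑ l, (if i < l ∧ q i / lam i - q l / lam l = β then (1:ℝ) else 0) * y (inH (i, l)))
            - (∑ l, (if i < l ∧ q l / lam l - q i / lam i = β then (1:ℝ) else 0) * y (inI (i, l))) := by
        rw [Finset.sum_filter_of_ne, Finset.sum_sub_distrib]
        intro l _ hne
        by_contra hnl
        apply hne
        rw [if_neg (fun hc => hnl hc.1), if_neg (fun hc => hnl hc.1)]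
        ring
      have hτf : (∑ l ∈ Finset.univ.filter (fun l => l < i),
          ((if l < i ∧ q l / lam l - q i / lam i = β then (1:ℝ) else 0) * y (inH (l, i))
            - (if l < i ∧ q i / lam i - q l / lam l = β then (1:ℝ) else 0) * y (inI (l, i))))
          = (∑ l, (if l < i ∧ q l / lam l - q i / lam i = β then (1:ℝ) else 0) * y (inH (l, i)))
            - (∑ l, (if l < i ∧ q i / lam i - q l / lam l = β then (1:ℝ) else 0) * y (inI (l, i))) := by
        rw [Finset.sum_filter_of_ne, Finset.sum_sub_distrib]
        intro l _ hne
        by_contra hnl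
        apply hne
        rw [if_neg (fun hc => hnl hc.1), if_neg (fun hc => hnl hc.1)]
        ring
      have hdiv : ((if q i / lam i = θ then (1:ℝ) else 0) * y (inG i)) / lam i
          = (1 / lam i) * ((if q i / lam i = θ then (1:ℝ) else 0) * y (inG i)) := by ring
      rw [hηf, hτf, hdiv]
      set G := (if q i / lam i = θ then (1:ℝ) else 0) * y (inG i) with hG
      set S1 := ∑ l, (if l < i ∧ q l / lam l - q i / lam i = β then (1:ℝ) else 0) * y (inH (l, i)) with hS1
      set S2 := ∑ l, (if i < l ∧ q i / lam i - q l / lam l = β then (1:ℝ) else 0) * y (inH (i, l)) with hS2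
      set S3 := ∑ l, (if i < l ∧ q l / lam l - q i / lam i = β then (1:ℝ) else 0) * y (inI (i, l)) with hS3
      set S4 := ∑ l, (if l < i ∧ q i / lam i - q l / lam l = β then (1:ℝ) else 0) * y (inI (l, i)) with hS4
      have hexp1 : (1 / lam i) * (S1 - S2) = (1 / lam i) * S1 - (1 / lam i) * S2 := by ring
      have hexp2 : (1 / lam i) * (S3 - S4) = (1 / lam i) * S3 - (1 / lam i) * S4 := by ring
      have hexp3 : (1 / lam i) * (S2 - S3) = (1 / lam i) * S2 - (1 / lam i) * S3 := by ring
      have hexp4 : (1 / lam i) * (S1 - S4) = (1 / lam i) * S1 - (1 / lam i) * S4 := by ring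
      linarith [h, hexp1, hexp2, hexp3, hexp4]
  · -- CS pi
    intro j
    beta_reduce
    by_cases h0 : (∑ i, x i j) = C j * (1 - z j)
    · have : C j * (1 - z j) - ∑ i, x i j = 0 := by rw [h0]; ring
      rw [this, mul_zero]
    · rw [if_neg h0, zero_mul, zero_mul]
  · -- CS sigma
    intro i j
    beta_reduce
    by_cases h0 : x i j = C j * a i j
    · have : C j * a i j - x i j = 0 := by rw [h0]; ring
      rw [this, mul_zero]
    · rw [if_neg h0, zero_mul, zero_mul]
  · -- CS nu
    intro i
    beta_reduce
    by_cases h0 : q i / lam i = θ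
    · have : θ - q i / lam i = 0 := by rw [h0]; ring
      rw [this, mul_zero]
    · rw [if_neg h0, zero_mul, zero_mul]
  · -- CS eta
    intro i i' hlt
    beta_reduce
    by_cases h0 : q i / lam i - q i' / lam i' = β
    · have : β - q i / lam i + q i' / lam i' = 0 := by linarith
      rw [this, mul_zero]
    · rw [if_neg (fun hc => h0 hc.2), zero_mul, zero_mul]
  · -- CS tau
    intro i i' hlt
    beta_reduce
    by_cases h0 : q i' / lam i' - q i / lam i = β
    · have : q i / lam i - q i' / lam i' + β = 0 := by linarith
      rw [this, mul_zero]
    · rw [if_neg (fun hc => h0 hc.2), zero_mul, zero_mul]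


lemma swap_lt {m : ℕ} (g : Fin m → Fin m → ℝ) :
    ∑ i, ∑ l ∈ univ.filter (fun l => l < i), g l i
      = ∑ i, ∑ l ∈ univ.filter (fun l => i < l), g i l := by
  rw [show (∑ i, ∑ l ∈ univ.filter (fun l => l < i), g l i)
      = ∑ i, ∑ l, if l < i then g l i else 0 by simp [Finset.sum_filter],
    Finset.sum_comm]
  simp [Finset.sum_filter]

theorem rev_dir
    (m n : ℕ)
    (lam : Fin m → ℝ) (hlam : ∀ i, 0 < lam i)
    (C : Fin n → ℝ)
    (d : Fin m → Fin n → ℝ)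
    (φ : Fin m → ℝ)
    (a : Fin m → Fin n → ℝ)
    (γ : ℝ)
    (θ β : ℝ)
    (z : Fin n → ℝ)
    (x : Fin m → Fin n → ℝ) (q : Fin m → ℝ)
    (hxq : (x, q) ∈ Feas lam C a θ β z)
    (μ : Fin m → ℝ) (π : Fin n → ℝ) (σ : Fin m → Fin n → ℝ) (ν : Fin m → ℝ)
    (η τ : Fin m → Fin m → ℝ)
    (hπ : ∀ j, 0 ≤ π j) (hσ : ∀ i j, 0 ≤ σ i j) (hν : ∀ i, 0 ≤ ν i)
    (hη : ∀ i i' : Fin m, i < i' → 0 ≤ η i i') (hτ : ∀ i i' : Fin m, i < i' → 0 ≤ τ i i')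
    (hA : ∀ i j, 0 ≤ γ * d i j + π j + μ i + σ i j)
    (hAx : ∀ i j, (γ * d i j + π j + μ i + σ i j) * x i j = 0)
    (hB : ∀ i, 0 ≤ (1 - γ) * φ i + μ i
          + (1 / lam i) * (∑ l ∈ univ.filter (fun l => i < l), (η i l - τ i l))
          - (1 / lam i) * (∑ l ∈ univ.filter (fun l => l < i), (η l i - τ l i))
          + ν i / lam i)
    (hBq : ∀ i, ((1 - γ) * φ i + μ i
          + (1 / lam i) * (∑ l ∈ univ.filter (fun l => i < l), (η i l - τ i l))
          - (1 / lam i) * (∑ l ∈ univ.filter (fun l => l < i), (η l i - τ l i))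
          + ν i / lam i) * q i = 0)
    (hcsπ : ∀ j, π j * (C j * (1 - z j) - ∑ i, x i j) = 0)
    (hcsσ : ∀ i j, σ i j * (C j * a i j - x i j) = 0)
    (hcsν : ∀ i, ν i * (θ - q i / lam i) = 0)
    (hcsη : ∀ i i' : Fin m, i < i' → η i i' * (β - q i / lam i + q i' / lam i') = 0)
    (hcsτ : ∀ i i' : Fin m, i < i' → τ i i' * (q i / lam i - q i' / lam i' + β) = 0) :
    ∀ p ∈ Feas lam C a θ β z, cost d φ γ (x, q) ≤ cost d φ γ p := by
  rintro ⟨x', q'⟩ ⟨hp1, hp2, hp3, hp4, hp5, hp6, hp7⟩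
  obtain ⟨hx1, hq1, hx3, hx4, hx5, hq6, hq7⟩ := hxq
  simp only at hp1 hp2 hp3 hp4 hp5 hp6 hp7 hx1 hq1 hx3 hx4 hx5 hq6 hq7
  set A : Fin m → Fin n → ℝ := fun i j => γ * d i j + π j + μ i + σ i j with hAdef
  set B : Fin m → ℝ := fun i => (1 - γ) * φ i + μ i
          + (1 / lam i) * (∑ l ∈ univ.filter (fun l => i < l), (η i l - τ i l))
          - (1 / lam i) * (∑ l ∈ univ.filter (fun l => l < i), (η l i - τ l i))
          + ν i / lam i with hBdef
  -- h1 : 0 ≤ ∑∑ A * Δx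
  have h1 : 0 ≤ ∑ i, ∑ j, A i j * (x' i j - x i j) := by
    apply Finset.sum_nonneg; intro i _
    apply Finset.sum_nonneg; intro j _
    have := hAx i j
    have hAij := hA i j
    have : A i j * (x' i j - x i j) = A i j * x' i j := by
      simp only [hAdef]; nlinarith [this]
    rw [this]
    exact mul_nonneg hAij (hp1 i j)
  -- h5 : 0 ≤ ∑ B * Δq
  have h5 : 0 ≤ ∑ i, B i * (q' i - q i) := by
    apply Finset.sum_nonneg; intro i _
    have h := hBq i
    have hBi := hB i
    have : B i * (q' i - q i) = B i * q' i := by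
      simp only [hBdef]; nlinarith [h]
    rw [this]
    exact mul_nonneg hBi (hp2 i)
  -- h2 : ∑∑ π j Δx ≤ 0
  have h2 : ∑ i, ∑ j, π j * (x' i j - x i j) ≤ 0 := by
    rw [Finset.sum_comm]
    apply Finset.sum_nonpos; intro j _
    have : ∑ i, π j * (x' i j - x i j) = π j * (∑ i, x' i j) - π j * (∑ i, x i j) := by
      rw [Finset.mul_sum, Finset.mul_sum, ← Finset.sum_sub_distrib]
      exact Finset.sum_congr rfl (fun i _ => by ring)
    rw [this]
    have h := hcsπ j
    nlinarith [mul_le_mul_of_nonneg_left (hp3 j) (hπ j)]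
  -- h3 : ∑∑ σ Δx ≤ 0
  have h3 : ∑ i, ∑ j, σ i j * (x' i j - x i j) ≤ 0 := by
    apply Finset.sum_nonpos; intro i _
    apply Finset.sum_nonpos; intro j _
    have h := hcsσ i j
    nlinarith [mul_le_mul_of_nonneg_left (hp5 i j) (hσ i j)]
  -- h6 : ∑ (ν/λ) Δq ≤ 0
  have h6 : ∑ i, (ν i / lam i) * (q' i - q i) ≤ 0 := by
    apply Finset.sum_nonpos; intro i _
    have h := hcsν i
    have hl := hlam i
    have h' : ν i * (q' i / lam i) ≤ ν i * θ :=
      mul_le_mul_of_nonneg_left (hp6 i) (hν i)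
    have e1 : (ν i / lam i) * (q' i - q i) = ν i * (q' i / lam i) - ν i * (q i / lam i) := by
      field_simp
    rw [e1]
    nlinarith
  -- h4 : ∑ μ (∑Δx + Δq) = 0
  have h4 : ∑ i, μ i * ((∑ j, (x' i j - x i j)) + (q' i - q i)) = 0 := by
    apply Finset.sum_eq_zero; intro i _
    have e1 := hp4 i
    have e2 := hx4 i
    have : (∑ j, (x' i j - x i j)) = (∑ j, x' i j) - (∑ j, x i j) := by
      rw [Finset.sum_sub_distrib]
    rw [this]
    have : (∑ j, x' i j) - (∑ j, x i j) + (q' i - q i) = 0 := by linarith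
    rw [this, mul_zero]
  -- h7 : pair sums ≤ 0
  have h7 : ∑ i, ((1 / lam i) * (q' i - q i)) *
        ((∑ l ∈ univ.filter (fun l => i < l), (η i l - τ i l))
          - (∑ l ∈ univ.filter (fun l => l < i), (η l i - τ l i))) ≤ 0 := by
    have expand : ∀ i : Fin m, ((1 / lam i) * (q' i - q i)) *
        ((∑ l ∈ univ.filter (fun l => i < l), (η i l - τ i l))
          - (∑ l ∈ univ.filter (fun l => l < i), (η l i - τ l i)))
        = (∑ l ∈ univ.filter (fun l => i < l), (η i l - τ i l) * ((1 / lam i) * (q' i - q i)))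
          - (∑ l ∈ univ.filter (fun l => l < i), (η l i - τ l i) * ((1 / lam i) * (q' i - q i))) := by
      intro i
      rw [mul_sub, Finset.mul_sum, Finset.mul_sum]
      congr 1 <;> exact Finset.sum_congr rfl (fun l _ => by ring)
    rw [Finset.sum_congr rfl (fun i _ => expand i), Finset.sum_sub_distrib]
    rw [swap_lt (fun l i => (η l i - τ l i) * ((1 / lam i) * (q' i - q i)))]
    rw [← Finset.sum_sub_distrib]
    apply Finset.sum_nonpos; intro i _
    rw [← Finset.sum_sub_distrib]
    apply Finset.sum_nonpos; intro l hl
    rw [Finset.mem_filter] at hl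
    have hil : i < l := hl.2
    have hηcs := hcsη i l hil
    have hτcs := hcsτ i l hil
    have hη0 := hη i l hil
    have hτ0 := hτ i l hil
    have hD' : |q' i / lam i - q' l / lam l| ≤ β := hp7 i l
    have hD'1 : q' i / lam i - q' l / lam l ≤ β := (abs_le.mp hD').2
    have hD'2 : -β ≤ q' i / lam i - q' l / lam l := (abs_le.mp hD').1
    have hli := hlam i
    have hll := hlam l
    have e : (η i l - τ i l) * ((1 / lam i) * (q' i - q i))
        - (η i l - τ i l) * ((1 / lam l) * (q' l - q l))
        = (η i l - τ i l) * ((q' i / lam i - q' l / lam l) - (q i / lam i - q l / lam l)) := by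
      field_simp; ring
    rw [e]
    nlinarith [hηcs, hτcs]
  -- now combine
  have hT1 : ∑ i, ∑ j, A i j * (x' i j - x i j)
      = γ * (∑ i, ∑ j, d i j * (x' i j - x i j))
        + (∑ i, ∑ j, π j * (x' i j - x i j))
        + (∑ i, ∑ j, μ i * (x' i j - x i j))
        + (∑ i, ∑ j, σ i j * (x' i j - x i j)) := by
    rw [Finset.mul_sum, ← Finset.sum_add_distrib, ← Finset.sum_add_distrib, ← Finset.sum_add_distrib]
    apply Finset.sum_congr rfl; intro i _
    rw [Finset.mul_sum, ← Finset.sum_add_distrib, ← Finset.sum_add_distrib, ← Finset.sum_add_distrib]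
    apply Finset.sum_congr rfl; intro j _
    simp only [hAdef]; ring
  have hT5 : ∑ i, B i * (q' i - q i)
      = (1 - γ) * (∑ i, φ i * (q' i - q i))
        + (∑ i, μ i * (q' i - q i))
        + (∑ i, ((1 / lam i) * (q' i - q i)) *
            ((∑ l ∈ univ.filter (fun l => i < l), (η i l - τ i l))
              - (∑ l ∈ univ.filter (fun l => l < i), (η l i - τ l i))))
        + (∑ i, (ν i / lam i) * (q' i - q i)) := by
    rw [Finset.mul_sum, ← Finset.sum_add_distrib, ← Finset.sum_add_distrib, ← Finset.sum_add_distrib]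
    apply Finset.sum_congr rfl; intro i _
    simp only [hBdef]; ring
  have hμsplit : ∑ i, μ i * ((∑ j, (x' i j - x i j)) + (q' i - q i))
      = (∑ i, ∑ j, μ i * (x' i j - x i j)) + (∑ i, μ i * (q' i - q i)) := by
    rw [← Finset.sum_add_distrib]
    apply Finset.sum_congr rfl; intro i _
    rw [mul_add, Finset.mul_sum]
  have hcost : cost d φ γ (x', q') - cost d φ γ (x, q)
      = (1 - γ) * (∑ i, φ i * (q' i - q i)) + γ * (∑ i, ∑ j, d i j * (x' i j - x i j)) := by
    simp only [cost]
    rw [show (∑ i, φ i * (q' i - q i)) = (∑ i, φ i * q' i) - (∑ i, φ i * q i) by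
      rw [← Finset.sum_sub_distrib]; exact Finset.sum_congr rfl (fun i _ => by ring)]
    rw [show (∑ i, ∑ j, d i j * (x' i j - x i j))
        = (∑ i, ∑ j, d i j * x' i j) - (∑ i, ∑ j, d i j * x i j) by
      rw [← Finset.sum_sub_distrib]
      refine Finset.sum_congr rfl (fun i _ => ?_)
      rw [← Finset.sum_sub_distrib]
      exact Finset.sum_congr rfl (fun j _ => by ring)]
    ring
  have final : 0 ≤ cost d φ γ (x', q') - cost d φ γ (x, q) := by
    rw [hcost]
    rw [hT1] at h1
    rw [hT5] at h5
    rw [hμsplit] at h4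
    linarith
  linarith


theorem stmt_8
    (m n : ℕ) (hm : 1 ≤ m) (hn : 1 ≤ n)
    (lam : Fin m → ℝ) (hlam : ∀ i, 0 < lam i)
    (C : Fin n → ℝ) (hC : ∀ j, 0 ≤ C j)
    (d : Fin m → Fin n → ℝ) (hd : ∀ i j, 0 ≤ d i j)
    (φ : Fin m → ℝ) (hφ : ∀ i, 0 ≤ φ i)
    (a : Fin m → Fin n → ℝ) (ha : ∀ i j, a i j = 0 ∨ a i j = 1)
    (γ : ℝ) (hγ0 : 0 ≤ γ) (hγ1 : γ ≤ 1)
    (θ β : ℝ) (hθ : 0 ≤ θ) (hβ : 0 ≤ β)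
    (z : Fin n → ℝ) (hz : ∀ j, z j = 0 ∨ z j = 1)
    (x : Fin m → Fin n → ℝ) (q : Fin m → ℝ)
    (hxq : (x, q) ∈ Feas lam C a θ β z) :
    (∀ p ∈ Feas lam C a θ β z, cost d φ γ (x, q) ≤ cost d φ γ p) ↔
    ∃ (μ : Fin m → ℝ) (π : Fin n → ℝ) (σ : Fin m → Fin n → ℝ) (ν : Fin m → ℝ)
      (η τ : Fin m → Fin m → ℝ),
      (∀ j, 0 ≤ π j) ∧ (∀ i j, 0 ≤ σ i j) ∧ (∀ i, 0 ≤ ν i) ∧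
      (∀ i i' : Fin m, i < i' → 0 ≤ η i i') ∧ (∀ i i' : Fin m, i < i' → 0 ≤ τ i i') ∧
      (∀ i j, 0 ≤ γ * d i j + π j + μ i + σ i j) ∧
      (∀ i j, (γ * d i j + π j + μ i + σ i j) * x i j = 0) ∧
      (∀ i, 0 ≤ (1 - γ) * φ i + μ i
          + (1 / lam i) * (∑ l ∈ univ.filter (fun l => i < l), (η i l - τ i l))
          - (1 / lam i) * (∑ l ∈ univ.filter (fun l => l < i), (η l i - τ l i))
          + ν i / lam i) ∧
      (∀ i, ((1 - γ) * φ i + μ i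
          + (1 / lam i) * (∑ l ∈ univ.filter (fun l => i < l), (η i l - τ i l))
          - (1 / lam i) * (∑ l ∈ univ.filter (fun l => l < i), (η l i - τ l i))
          + ν i / lam i) * q i = 0) ∧
      (∀ j, π j * (C j * (1 - z j) - ∑ i, x i j) = 0) ∧
      (∀ i j, σ i j * (C j * a i j - x i j) = 0) ∧
      (∀ i, ν i * (θ - q i / lam i) = 0) ∧
      (∀ i i' : Fin m, i < i' → η i i' * (β - q i / lam i + q i' / lam i') = 0) ∧
      (∀ i i' : Fin m, i < i' → τ i i' * (q i / lam i - q i' / lam i' + β) = 0) := by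
  constructor
  · intro hopt
    exact fwd_dir m n lam hlam C d φ a γ θ β hβ z x q hxq hopt
  · rintro ⟨μ, π, σ, ν, η, τ, hπ, hσ, hν, hη, hτ, hA, hAx, hB, hBq, hcsπ, hcsσ, hcsν, hcsη, hcsτ⟩
    exact rev_dir m n lam hlam C d φ a γ θ β z x q hxq μ π σ ν η τ hπ hσ hν hη hτ hA hAx hB hBq hcsπ hcsσ hcsν hcsη hcsτ
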